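/- For every z ∈ ℂ ∖ (−∞, 0], |logΓ(z) − ((z − 1/2)·log z − z + log(2π)/2)| ≤ (π/8) · 1/dist(z, ℝ_{≤0}), where dist(z, ℝ_{≤0}) is the distance from z to the set (−∞, 0] ⊂ ℂ. -/

import Mathlib

open Complex Filter Real Set MeasureTheory intervalIntegral Finset Topology


lemma slit_add {z : ℂ} (hz : z ∈ Complex.slitPlane) {t : ℝ} (ht : 0 ≤ t) :
    z + (t:ℂ) ∈ Complex.slitPlane := by
  rw [Complex.mem_slitPlane_iff] at hz ⊢
  simp only [Complex.add_re, Complex.add_im, Complex.ofReal_re, Complex.ofReal_im, add_zero]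
  rcases hz with h | h
  · exact Or.inl (by linarith)
  · exact Or.inr h

noncomputable def gfun (w : ℂ) : ℂ := (w + 1/2) * (Complex.log (w+1) - Complex.log w) - 1

section
variable {z : ℂ}

lemma ne_zero_add (hz : z ∈ Complex.slitPlane) {t : ℝ} (ht : 0 ≤ t) : z + (t:ℂ) ≠ 0 :=
  Complex.slitPlane_ne_zero (slit_add hz ht)

lemma hasDerivAt_inv_add (hz : z ∈ Complex.slitPlane) {t : ℝ} (ht : 0 ≤ t) :
    HasDerivAt (fun s : ℝ => (z + (s:ℂ))⁻¹) (-(((z + (t:ℂ))^2)⁻¹)) t := by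
  have h1 : HasDerivAt (fun w : ℂ => (z + w)⁻¹) (-(((z + (t:ℂ))^2)⁻¹)) (t : ℂ) := by
    have := ((hasDerivAt_id ((t:ℂ))).const_add z).inv (ne_zero_add hz ht)
    exact this.congr_deriv (by simp [neg_div])
  simpa using h1.comp_ofReal

lemma hasDerivAt_log_add (hz : z ∈ Complex.slitPlane) {t : ℝ} (ht : 0 ≤ t) :
    HasDerivAt (fun s : ℝ => Complex.log (z + s)) ((z + t)⁻¹) t := by
  have h1 : HasDerivAt (fun w : ℂ => Complex.log (z + w)) ((z + t)⁻¹) (t : ℂ) := by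
    have := (Complex.hasDerivAt_log (slit_add hz ht)).comp (t:ℂ)
      ((hasDerivAt_id (t:ℂ)).const_add z)
    exact this.congr_deriv (by simp)
  simpa using h1.comp_ofReal

lemma cont_inv_add (hz : z ∈ Complex.slitPlane) : ContinuousOn (fun s : ℝ => (z + (s:ℂ))⁻¹) (Set.Icc 0 1) := by
  apply ContinuousOn.inv₀
  · fun_prop
  · intro t ht
    exact ne_zero_add hz ht.1

lemma cont_inv_sq_add (hz : z ∈ Complex.slitPlane) : ContinuousOn (fun s : ℝ => ((z + (s:ℂ))^2)⁻¹) (Set.Icc 0 1) := by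
  apply ContinuousOn.inv₀
  · fun_prop
  · intro t ht
    exact pow_ne_zero _ (ne_zero_add hz ht.1)

lemma integral_inv_add (hz : z ∈ Complex.slitPlane) :
    ∫ t in (0:ℝ)..1, (z + (t:ℂ))⁻¹ = Complex.log (z+1) - Complex.log z := by
  have := intervalIntegral.integral_eq_sub_of_hasDerivAt
    (f := fun s : ℝ => Complex.log (z + s)) (f' := fun s : ℝ => (z + (s:ℂ))⁻¹)
    (a := 0) (b := 1) ?_ ?_
  · simpa using this
  · intro x hx
    rw [Set.uIcc_of_le (by norm_num)] at hx
    exact hasDerivAt_log_add hz hx.1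
  · apply ContinuousOn.intervalIntegrable
    rw [Set.uIcc_of_le (by norm_num)]
    exact cont_inv_add hz

lemma gfun_eq_integral (hz : z ∈ Complex.slitPlane) :
    gfun z = ∫ t in (0:ℝ)..1, ((t:ℂ) - (t:ℂ)^2)/2 * ((z + t)^2)⁻¹ := by
  -- step 1: ∫ (1/2 - t)/(z+t) = gfun z
  have h1 : ∫ t in (0:ℝ)..1, ((1/2 - (t:ℂ)) * (z + t)⁻¹) = gfun z := by
    have heq : ∀ t ∈ Set.uIcc (0:ℝ) 1,
        (1/2 - (t:ℂ)) * (z + t)⁻¹ = (z + 1/2) * (z + t)⁻¹ - 1 := by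
      intro t ht
      rw [Set.uIcc_of_le (by norm_num)] at ht
      have hne := ne_zero_add hz ht.1
      field_simp
      ring
    rw [intervalIntegral.integral_congr heq]
    rw [intervalIntegral.integral_sub, intervalIntegral.integral_const_mul,
      integral_inv_add hz]
    · simp [gfun]
    · apply ContinuousOn.intervalIntegrable
      rw [Set.uIcc_of_le (by norm_num)]
      exact (continuousOn_const).mul (cont_inv_add hz)
    · apply ContinuousOn.intervalIntegrable
      exact continuousOn_const
  -- step 2: integration by parts
  have h2 : ∫ t in (0:ℝ)..1,
      ((1/2 - (t:ℂ)) * (z + t)⁻¹ - ((t:ℂ) - (t:ℂ)^2)/2 * ((z + t)^2)⁻¹) = 0 := by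
    have := intervalIntegral.integral_eq_sub_of_hasDerivAt
      (f := fun s : ℝ => ((s:ℂ) - (s:ℂ)^2)/2 * (z + s)⁻¹)
      (f' := fun t : ℝ => ((1/2 - (t:ℂ)) * (z + t)⁻¹ - ((t:ℂ) - (t:ℂ)^2)/2 * ((z + t)^2)⁻¹))
      (a := 0) (b := 1) ?_ ?_
    · rw [this]; norm_num
    · intro x hx
      rw [Set.uIcc_of_le (by norm_num)] at hx
      have hQ : HasDerivAt (fun s : ℝ => ((s:ℂ) - (s:ℂ)^2)/2) (1/2 - (x:ℂ)) x := by
        have h : HasDerivAt (fun w : ℂ => (w - w^2)/2) (1/2 - (x:ℂ)) (x:ℂ) := by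
          have := ((hasDerivAt_id ((x:ℂ))).sub ((hasDerivAt_pow 2 ((x:ℂ))))).div_const 2
          exact this.congr_deriv (by simp; ring)
        simpa using h.comp_ofReal
      have := hQ.mul (hasDerivAt_inv_add hz hx.1)
      exact this.congr_deriv (by ring)
    · apply ContinuousOn.intervalIntegrable
      rw [Set.uIcc_of_le (by norm_num)]
      exact ((continuousOn_const.sub (Complex.continuous_ofReal.continuousOn)).mul
        (cont_inv_add hz)).sub
        ((((Complex.continuous_ofReal.continuousOn).sub
          ((Complex.continuous_ofReal.pow 2).continuousOn)).div_const 2).mul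
        (cont_inv_sq_add hz))
  rw [← h1]
  have h3 := intervalIntegral.integral_sub
    (f := fun t : ℝ => (1/2 - (t:ℂ)) * (z + t)⁻¹)
    (g := fun t : ℝ => ((t:ℂ) - (t:ℂ)^2)/2 * ((z + t)^2)⁻¹) (a := 0) (b := 1) (μ := MeasureTheory.volume) ?_ ?_
  · rw [h3] at h2
    linear_combination h2
  · apply ContinuousOn.intervalIntegrable
    rw [Set.uIcc_of_le (by norm_num)]
    exact (continuousOn_const.sub (Complex.continuous_ofReal.continuousOn)).mul
      (cont_inv_add hz)
  · apply ContinuousOn.intervalIntegrable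
    rw [Set.uIcc_of_le (by norm_num)]
    exact (((Complex.continuous_ofReal.continuousOn).sub
      ((Complex.continuous_ofReal.pow 2).continuousOn)).div_const 2).mul
      (cont_inv_sq_add hz)

lemma norm_gfun_le (hz : z ∈ Complex.slitPlane) :
    ‖gfun z‖ ≤ ∫ t in (0:ℝ)..1, (1/8) * (‖z + (t:ℂ)‖^2)⁻¹ := by
  rw [gfun_eq_integral hz]
  apply le_trans (intervalIntegral.norm_integral_le_integral_norm (by norm_num))
  apply intervalIntegral.integral_mono_on (by norm_num)
  · apply ContinuousOn.intervalIntegrable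
    rw [Set.uIcc_of_le (by norm_num)]
    exact ((((Complex.continuous_ofReal.continuousOn).sub
      ((Complex.continuous_ofReal.pow 2).continuousOn)).div_const 2).mul
      (cont_inv_sq_add hz)).norm
  · apply ContinuousOn.intervalIntegrable
    rw [Set.uIcc_of_le (by norm_num)]
    apply continuousOn_const.mul
    apply ContinuousOn.inv₀
    · fun_prop
    · intro t ht
      exact pow_ne_zero _ (norm_ne_zero_iff.2 (ne_zero_add hz ht.1))
  · intro t ht
    rw [norm_mul, norm_inv, norm_pow]
    have h1 : ‖((t:ℂ) - (t:ℂ)^2)/2‖ ≤ 1/8 := by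
      have : ((t:ℂ) - (t:ℂ)^2)/2 = (((t - t^2)/2 : ℝ) : ℂ) := by push_cast; ring
      rw [this, Complex.norm_real, Real.norm_eq_abs, abs_le]
      constructor <;> nlinarith [ht.1, ht.2, sq_nonneg (t - 1/2), sq_nonneg t]
    gcongr


noncomputable def Sset : Set ℂ := {w : ℂ | w.im = 0 ∧ w.re ≤ 0}

lemma Sset_eq : Sset = Complex.slitPlaneᶜ := by
  ext w
  simp [Sset, Complex.mem_slitPlane_iff, not_or, and_comm, not_lt, le_antisymm_iff]

lemma d_pos {z : ℂ} (hz : z ∈ Complex.slitPlane) : 0 < Metric.infDist z Sset := by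
  have hcl : IsClosed Sset := by
    rw [Sset_eq]; exact Complex.isOpen_slitPlane.isClosed_compl
  rw [← hcl.notMem_iff_infDist_pos ⟨0, by simp [Sset]⟩]
  rw [Sset_eq]; simpa using hz

lemma norm_sq_eq (w : ℂ) : ‖w‖^2 = w.re^2 + w.im^2 := by
  rw [Complex.sq_norm, Complex.normSq_apply]; ring

lemma exists_c {z : ℂ} (hz : z ∈ Complex.slitPlane) :
    ∃ c : ℝ, ∀ t : ℝ, 0 ≤ t →
      (t + c)^2 + (Metric.infDist z Sset)^2 ≤ ‖z + (t:ℂ)‖^2 := by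
  set d := Metric.infDist z Sset with hd
  have hd0 : 0 < d := d_pos hz
  rcases le_or_gt 0 z.re with hre | hre
  · refine ⟨0, fun t ht => ?_⟩
    have h1 : d ≤ ‖z‖ := by
      have := Metric.infDist_le_dist_of_mem (x := z) (show (0:ℂ) ∈ Sset by simp [Sset])
      simpa using this
    have h2 : d^2 ≤ ‖z‖^2 := by gcongr <;> exact hd0.le
    rw [norm_sq_eq] at h2 ⊢
    simp only [Complex.add_re, Complex.add_im, Complex.ofReal_re, Complex.ofReal_im, add_zero]
    nlinarith
  · refine ⟨z.re, fun t ht => ?_⟩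
    have h1 : d ≤ |z.im| := by
      have hm : ((z.re : ℂ)) ∈ Sset := by simp [Sset, hre.le]
      have := Metric.infDist_le_dist_of_mem (x := z) hm
      rw [Complex.dist_eq] at this
      have he : z - (z.re:ℂ) = z.im * I := by
        linear_combination -(Complex.re_add_im z)
      rw [he, norm_mul, Complex.norm_real, Real.norm_eq_abs, Complex.norm_I, mul_one] at this
      exact this
    have h2 : d^2 ≤ z.im^2 := by
      calc d^2 ≤ |z.im|^2 := by gcongr <;> first | exact hd0.le | exact h1
      _ = z.im^2 := sq_abs _
    rw [norm_sq_eq]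
    simp only [Complex.add_re, Complex.add_im, Complex.ofReal_re, Complex.ofReal_im, add_zero]
    nlinarith

lemma cont_aux {c d : ℝ} (hd : 0 < d) :
    Continuous (fun s : ℝ => (1/8) * (((s + c)^2 + d^2)⁻¹)) := by
  apply continuous_const.mul
  apply Continuous.inv₀
  · fun_prop
  · intro s; positivity

lemma integral_aux {c d : ℝ} (hd : 0 < d) (N : ℕ) :
    ∫ s in (0:ℝ)..(N:ℝ), (1/8) * (((s + c)^2 + d^2)⁻¹)
      = (1/8) * (Real.arctan ((N + c)/d) / d - Real.arctan ((0 + c)/d) / d) := by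
  have hF : ∀ s : ℝ, HasDerivAt (fun u : ℝ => (1/8) * (Real.arctan ((u + c)/d) / d))
      ((1/8) * (((s + c)^2 + d^2)⁻¹)) s := by
    intro s
    have h1 : HasDerivAt (fun u : ℝ => (u + c)/d) (1/d) s :=
      ((hasDerivAt_id s).add_const c).div_const d
    have h2 := (Real.hasDerivAt_arctan ((s + c)/d)).comp s h1
    have h3 := (h2.div_const d).const_mul (1/8 : ℝ)
    exact h3.congr_deriv (by field_simp; ring)
  rw [intervalIntegral.integral_eq_sub_of_hasDerivAt (fun x _ => hF x)
    ((cont_aux hd).intervalIntegrable _ _)]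
  ring

lemma sum_B_le {z : ℂ} (hz : z ∈ Complex.slitPlane) (N : ℕ) :
    ∑ n ∈ Finset.range N, ∫ t in (0:ℝ)..1, (1/8) * ((‖z + (n:ℂ) + (t:ℂ)‖^2)⁻¹)
      ≤ π/8 * (1 / Metric.infDist z Sset) := by
  set d := Metric.infDist z Sset with hdd
  have hd0 : 0 < d := d_pos hz
  obtain ⟨c, hc⟩ := exists_c hz
  -- pointwise comparison on each interval
  have hstep : ∀ n : ℕ, (∫ t in (0:ℝ)..1, (1/8) * ((‖z + (n:ℂ) + (t:ℂ)‖^2)⁻¹))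
      ≤ ∫ s in (n:ℝ)..((n:ℝ)+1), (1/8) * (((s + c)^2 + d^2)⁻¹) := by
    intro n
    have htrans : ∫ s in (n:ℝ)..((n:ℝ)+1), (1/8) * (((s + c)^2 + d^2)⁻¹)
        = ∫ t in (0:ℝ)..1, (1/8) * ((((n:ℝ) + t + c)^2 + d^2)⁻¹) := by
      have := intervalIntegral.integral_comp_add_left
        (a := (0:ℝ)) (b := 1) (fun s : ℝ => (1/8) * (((s + c)^2 + d^2)⁻¹)) (n:ℝ)
      rw [this]; norm_num
    rw [htrans]
    apply intervalIntegral.integral_mono_on (by norm_num)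
    · apply ContinuousOn.intervalIntegrable
      rw [Set.uIcc_of_le (by norm_num : (0:ℝ) ≤ 1)]
      apply ContinuousOn.mul continuousOn_const
      apply ContinuousOn.inv₀
      · fun_prop
      · intro t ht
        have hne : z + (n:ℂ) + (t:ℂ) ≠ 0 := by
          have h0 := ht.1
          have h := Complex.slitPlane_ne_zero (slit_add hz (by positivity : (0:ℝ) ≤ (n:ℝ) + t))
          push_cast at h ⊢
          rw [add_assoc]
          exact h
        have hnn : ‖z + (n:ℂ) + (t:ℂ)‖ ≠ 0 := norm_ne_zero_iff.2 hne
        positivity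
    · exact ((cont_aux hd0).comp (by fun_prop)).intervalIntegrable _ _
    · intro t ht
      have key := hc ((n:ℝ) + t) (by have := ht.1; positivity)
      have hz2 : ‖z + (n:ℂ) + (t:ℂ)‖^2 = ‖z + (((n:ℝ) + t : ℝ):ℂ)‖^2 := by
        push_cast; ring_nf
      rw [hz2]
      apply mul_le_mul_of_nonneg_left _ (by norm_num)
      exact inv_anti₀ (by positivity) key
  calc ∑ n ∈ Finset.range N, ∫ t in (0:ℝ)..1, (1/8) * ((‖z + (n:ℂ) + (t:ℂ)‖^2)⁻¹)
      ≤ ∑ n ∈ Finset.range N, ∫ s in (n:ℝ)..((n:ℝ)+1), (1/8) * (((s + c)^2 + d^2)⁻¹) :=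
        Finset.sum_le_sum (fun n _ => hstep n)
    _ = ∫ s in (0:ℝ)..(N:ℝ), (1/8) * (((s + c)^2 + d^2)⁻¹) := by
        have := intervalIntegral.sum_integral_adjacent_intervals
          (a := fun k : ℕ => (k:ℝ)) (n := N) (μ := MeasureTheory.volume)
          (f := fun s : ℝ => (1/8) * (((s + c)^2 + d^2)⁻¹))
          (fun k _ => (cont_aux hd0).intervalIntegrable _ _)
        push_cast at this ⊢
        rw [this]
    _ = (1/8) * (Real.arctan ((N + c)/d) / d - Real.arctan ((0 + c)/d) / d) :=
        integral_aux hd0 N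
    _ ≤ π/8 * (1/d) := by
        have h1 : Real.arctan ((N + c)/d) < π/2 := Real.arctan_lt_pi_div_two _
        have h2 : -(π/2) < Real.arctan ((0 + c)/d) := Real.neg_pi_div_two_lt_arctan _
        have h3 : (1/8 : ℝ) * (Real.arctan ((N + c)/d)/d - Real.arctan ((0 + c)/d)/d)
            = (Real.arctan ((N + c)/d) - Real.arctan ((0 + c)/d))/8 * (1/d) := by ring
        rw [h3]
        apply mul_le_mul_of_nonneg_right _ (by positivity)
        linarith


lemma log_div_pos {w : ℂ} (hw : w ≠ 0) {r : ℝ} (hr : 0 < r) :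
    Complex.log (w / (r:ℂ)) = Complex.log w - (Real.log r : ℂ) := by
  have h := Complex.log_ofReal_mul (r := r⁻¹) (inv_pos.2 hr) (x := w) hw
  have he : w / (r:ℂ) = ((r⁻¹ : ℝ) : ℂ) * w := by
    push_cast
    field_simp
  rw [he, h, Real.log_inv]
  push_cast
  ring

noncomputable def Efun (z : ℂ) (N : ℕ) : ℂ :=
  -(Real.eulerMascheroniConstant : ℂ) * z + z * ((harmonic N : ℚ) : ℂ)
    + ((Real.log (Nat.factorial N) : ℝ) : ℂ) + (N:ℂ) + (z - 1/2) * Complex.log z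
    - (z + N + 1/2) * Complex.log (z + N)

noncomputable def ffun (z : ℂ) (m : ℕ) : ℂ :=
  z / ((m : ℂ) + 1) - Complex.log (1 + z / ((m : ℂ) + 1))

lemma key_identity {z : ℂ} (hz : z ∈ Complex.slitPlane) (N : ℕ) :
    -(Real.eulerMascheroniConstant : ℂ) * z - Complex.log z
      + ∑ m ∈ Finset.range N, ffun z m
      = (∑ n ∈ Finset.range N, gfun (z + n)) + Efun z N := by
  induction N with
  | zero =>
    simp only [Finset.range_zero, Finset.sum_empty, add_zero, zero_add, Efun]
    simp only [Nat.cast_zero, add_zero, harmonic_zero, Nat.factorial_zero, Nat.cast_one,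
      Real.log_one, Complex.ofReal_zero, Rat.cast_zero, mul_zero]
    ring
  | succ N ih =>
    rw [Finset.sum_range_succ, Finset.sum_range_succ, ← add_assoc, ih]
    -- reduces to: ffun z N + Efun z N = gfun (z + N) + Efun z (N+1) (after rearrangement)
    have hzN : z + ((N:ℝ):ℂ) ≠ 0 :=
      Complex.slitPlane_ne_zero (slit_add hz (Nat.cast_nonneg N))
    have hzN1 : z + (N:ℂ) + 1 ≠ 0 := by
      have h := Complex.slitPlane_ne_zero (slit_add hz (by positivity : (0:ℝ) ≤ (N:ℝ)+1))
      push_cast at h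
      rw [add_assoc]
      exact h
    have hlog : Complex.log (1 + z / ((N : ℂ) + 1))
        = Complex.log (z + (N:ℂ) + 1) - (Real.log ((N:ℝ)+1) : ℂ) := by
      have hne : ((N:ℂ) + 1) ≠ 0 := Nat.cast_add_one_ne_zero N
      have h1 : 1 + z / ((N : ℂ) + 1) = (z + (N:ℂ) + 1) / ((((N:ℝ)+1) : ℝ) : ℂ) := by
        push_cast
        field_simp
        ring
      rw [h1, log_div_pos hzN1 (by positivity)]
    have hfact : (Real.log (Nat.factorial (N+1)) : ℝ) = Real.log (Nat.factorial N) + Real.log ((N:ℝ)+1) := by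
      rw [Nat.factorial_succ]
      push_cast
      rw [Real.log_mul (by positivity) (by positivity)]
      ring
    have hharm : ((harmonic (N+1) : ℚ) : ℂ) = ((harmonic N : ℚ) : ℂ) + 1/((N:ℂ)+1) := by
      rw [harmonic_succ]
      push_cast
      ring
    simp only [Efun, ffun, gfun, hlog, hfact, hharm]
    push_cast
    simp only [← add_assoc]
    ring

lemma tendsto_log_one_add_div (z : ℂ) :
    Tendsto (fun N : ℕ => Complex.log (1 + z / N)) atTop (𝓝 0) := by
  apply squeeze_zero_norm' (a := fun N : ℕ => (3/2) * ‖z‖ / N)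
  · filter_upwards [eventually_ge_atTop (⌈2 * ‖z‖⌉₊ + 1)] with N hN
    have hN0 : 0 < (N:ℝ) := by
      have : 1 ≤ N := le_trans (Nat.le_add_left 1 _) hN
      exact_mod_cast this
    have hle : ‖z / (N:ℂ)‖ ≤ 1/2 := by
      rw [norm_div, Complex.norm_natCast, div_le_iff₀ hN0]
      have h2 : 2 * ‖z‖ ≤ ⌈2 * ‖z‖⌉₊ := Nat.le_ceil _
      have h3 : ((⌈2 * ‖z‖⌉₊ : ℕ) : ℝ) ≤ N := by exact_mod_cast le_trans (Nat.le_succ _) hN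
      nlinarith [norm_nonneg z]
    calc ‖Complex.log (1 + z / N)‖ ≤ (3/2) * ‖z / (N:ℂ)‖ :=
          Complex.norm_log_one_add_half_le_self hle
      _ = (3/2) * ‖z‖ / N := by
          rw [norm_div, Complex.norm_natCast]; ring
  · have := Filter.Tendsto.const_div_atTop (g := fun N : ℕ => (N:ℝ)) tendsto_natCast_atTop_atTop ((3/2) * ‖z‖)
    simpa using this

lemma tendsto_mul_log_one_add_div (z : ℂ) :
    Tendsto (fun N : ℕ => (N:ℂ) * Complex.log (1 + z / N) - z) atTop (𝓝 0) := by
  apply squeeze_zero_norm' (a := fun N : ℕ => ‖z‖^2 / N)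
  · filter_upwards [eventually_ge_atTop (⌈2 * ‖z‖⌉₊ + 1)] with N hN
    have hN0 : 0 < (N:ℝ) := by
      have : 1 ≤ N := le_trans (Nat.le_add_left 1 _) hN
      exact_mod_cast this
    have hle : ‖z / (N:ℂ)‖ ≤ 1/2 := by
      rw [norm_div, Complex.norm_natCast, div_le_iff₀ hN0]
      have h2 : 2 * ‖z‖ ≤ ⌈2 * ‖z‖⌉₊ := Nat.le_ceil _
      have h3 : ((⌈2 * ‖z‖⌉₊ : ℕ) : ℝ) ≤ N := by exact_mod_cast le_trans (Nat.le_succ _) hN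
      nlinarith [norm_nonneg z]
    have hNC : (N:ℂ) ≠ 0 := by

      exact_mod_cast hN0.ne'
    have heq : (N:ℂ) * Complex.log (1 + z / N) - z
        = (N:ℂ) * (Complex.log (1 + z / N) - z / N) := by
      field_simp
    rw [heq, norm_mul, Complex.norm_natCast]
    have hb := Complex.norm_log_one_add_sub_self_le (lt_of_le_of_lt hle (by norm_num))
    have hinv : (1 - ‖z / (N:ℂ)‖)⁻¹ ≤ 2 := by
      rw [inv_le_comm₀ (by linarith) (by norm_num)]
      linarith
    calc (N:ℝ) * ‖Complex.log (1 + z / N) - z / N‖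
        ≤ (N:ℝ) * (‖z / (N:ℂ)‖^2 * (1 - ‖z / (N:ℂ)‖)⁻¹ / 2) := by
          gcongr
      _ ≤ (N:ℝ) * (‖z / (N:ℂ)‖^2 * 2 / 2) := by gcongr
      _ = ‖z‖^2 / N := by
          rw [norm_div, Complex.norm_natCast]
          field_simp
  · have := Filter.Tendsto.const_div_atTop (g := fun N : ℕ => (N:ℝ)) tendsto_natCast_atTop_atTop (‖z‖^2)
    simpa using this

lemma tendsto_stirling_real :
    Tendsto (fun N : ℕ => Real.log (Nat.factorial N) + N - ((N:ℝ) + 1/2) * Real.log N)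
      atTop (𝓝 ((1/2) * Real.log (2 * π))) := by
  have h1 : Tendsto (fun N : ℕ => Real.log (Stirling.stirlingSeq N) + (1/2) * Real.log 2)
      atTop (𝓝 ((1/2) * Real.log (2 * π))) := by
    have h2 := (Real.continuousAt_log (x := Real.sqrt π) (by positivity)).tendsto.comp
      Stirling.tendsto_stirlingSeq_sqrt_pi
    have h3 : Real.log (Real.sqrt π) = (1/2) * Real.log π := by
      rw [Real.log_sqrt Real.pi_pos.le]; ring
    have := h2.add_const ((1/2) * Real.log 2)
    rw [h3] at this
    convert this using 2
    · rfl
    rw [Real.log_mul (by norm_num) Real.pi_pos.ne']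
    ring
  apply h1.congr'
  filter_upwards [eventually_ge_atTop 1] with N hN
  have hN0 : 0 < (N:ℝ) := by exact_mod_cast hN
  rw [Stirling.log_stirlingSeq_formula]
  rw [Real.log_mul (by norm_num) hN0.ne', Real.log_div hN0.ne' (Real.exp_ne_zero 1),
    Real.log_exp]
  ring

lemma tendsto_Efun {z : ℂ} (hz : z ∈ Complex.slitPlane) :
    Tendsto (fun N : ℕ => Efun z N) atTop
      (𝓝 ((z - 1/2) * Complex.log z - z + (Real.log (2*π) : ℂ)/2)) := by
  set γ := Real.eulerMascheroniConstant
  have hG : Tendsto (fun N : ℕ =>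
      (z - 1/2) * Complex.log z - z
      + z * (((((harmonic N : ℚ):ℝ) - Real.log N - γ) : ℝ) : ℂ)
      + (((Real.log (Nat.factorial N) + N - ((N:ℝ)+1/2) * Real.log N) : ℝ) : ℂ)
      - (z + 1/2) * Complex.log (1 + z/N)
      - ((N:ℂ) * Complex.log (1 + z/N) - z)) atTop
      (𝓝 ((z - 1/2) * Complex.log z - z + (Real.log (2*π) : ℂ)/2)) := by
    have t1 : Tendsto (fun N : ℕ => ((((harmonic N : ℚ):ℝ) - Real.log N - γ : ℝ) : ℂ))
        atTop (𝓝 0) := by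
      have h : Tendsto _ atTop (𝓝 (γ - γ)) := Real.tendsto_harmonic_sub_log.sub_const γ
      have h2 := (Complex.continuous_ofReal.tendsto _).comp h
      simpa only [Function.comp_def, sub_self, Complex.ofReal_zero] using h2
    have t2 : Tendsto (fun N : ℕ =>
        (((Real.log (Nat.factorial N) + N - ((N:ℝ)+1/2) * Real.log N) : ℝ) : ℂ))
        atTop (𝓝 (((1/2) * Real.log (2*π) : ℝ) : ℂ)) :=
      (Complex.continuous_ofReal.tendsto _).comp tendsto_stirling_real
    have t3 := (tendsto_log_one_add_div z).const_mul (z + 1/2)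
    have t4 := tendsto_mul_log_one_add_div z
    have t0 : Tendsto (fun _ : ℕ => (z - 1/2) * Complex.log z - z) atTop
        (𝓝 ((z - 1/2) * Complex.log z - z)) := tendsto_const_nhds
    have := ((((t0.add (t1.const_mul z)).add t2).sub t3).sub t4)
    convert this using 2
    push_cast
    ring
  apply hG.congr'
  filter_upwards [eventually_ge_atTop 1] with N hN
  have hN0 : 0 < (N:ℝ) := by exact_mod_cast hN
  have hzN : z + ((N:ℝ):ℂ) ≠ 0 :=
    Complex.slitPlane_ne_zero (slit_add hz (Nat.cast_nonneg N))
  have hlog : Complex.log (1 + z / N) = Complex.log (z + (N:ℂ)) - (Real.log (N:ℝ) : ℂ) := by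
    have hne : ((N:ℂ)) ≠ 0 := by exact_mod_cast hN0.ne'
    have h1 : 1 + z / (N:ℂ) = (z + (N:ℂ)) / (((N:ℝ) : ℝ) : ℂ) := by
      push_cast
      field_simp
      ring
    rw [h1, log_div_pos (by push_cast at hzN ⊢; exact hzN) (by positivity)]
  rw [Efun, hlog]
  push_cast
  ring


/-- The Log Gamma function, defined on `ℂ ∖ (−∞, 0]` by
`logΓ(z) = −γz − log z + ∑_{m=1}^∞ (z/m − log(1 + z/m))`. -/
noncomputable def logGamma (z : ℂ) : ℂ :=
  -(Real.eulerMascheroniConstant : ℂ) * z - Complex.log z +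
    ∑' m : ℕ, (z / ((m : ℂ) + 1) - Complex.log (1 + z / ((m : ℂ) + 1)))

lemma summable_ffun (z : ℂ) : Summable (fun m : ℕ => ffun z m) := by
  apply Summable.of_norm_bounded_eventually (g := fun m : ℕ => ‖z‖^2 * (1/((m:ℝ)+1)^2))
  · apply Summable.mul_left
    have h1 : Summable (fun n : ℕ => 1/((n:ℝ))^2) := by
      exact_mod_cast summable_one_div_nat_pow.2 one_lt_two
    have h2 := (summable_nat_add_iff 1).2 h1
    apply h2.congr
    intro n
    push_cast
    ring
  · rw [Nat.cofinite_eq_atTop]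
    filter_upwards [eventually_ge_atTop ⌈2*‖z‖⌉₊] with m hm
    have hm1 : 0 < (m:ℝ) + 1 := by positivity
    have hnorm : ‖z / ((m:ℂ) + 1)‖ = ‖z‖ / ((m:ℝ)+1) := by
      rw [norm_div]
      congr 1
      have : ((m:ℂ) + 1) = (((m:ℝ)+1 : ℝ) : ℂ) := by push_cast; ring
      rw [this, Complex.norm_real, Real.norm_eq_abs, abs_of_pos hm1]
    have hle : ‖z / ((m:ℂ) + 1)‖ ≤ 1/2 := by
      rw [hnorm, div_le_iff₀ hm1]
      have h2 : 2 * ‖z‖ ≤ ⌈2 * ‖z‖⌉₊ := Nat.le_ceil _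
      have h3 : ((⌈2 * ‖z‖⌉₊ : ℕ) : ℝ) ≤ m := by exact_mod_cast hm
      nlinarith [norm_nonneg z]
    have hb := Complex.norm_log_one_add_sub_self_le (lt_of_le_of_lt hle (by norm_num))
    have hinv : (1 - ‖z / ((m:ℂ)+1)‖)⁻¹ ≤ 2 := by
      rw [inv_le_comm₀ (by linarith) (by norm_num)]
      linarith
    have : ‖ffun z m‖ = ‖Complex.log (1 + z / ((m:ℂ)+1)) - z / ((m:ℂ)+1)‖ := by
      rw [ffun, ← norm_neg]
      congr 1
      ring
    rw [this]
    calc ‖Complex.log (1 + z / ((m:ℂ)+1)) - z / ((m:ℂ)+1)‖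
        ≤ ‖z / ((m:ℂ)+1)‖^2 * (1 - ‖z / ((m:ℂ)+1)‖)⁻¹ / 2 := hb
      _ ≤ ‖z / ((m:ℂ)+1)‖^2 * 2 / 2 := by gcongr
      _ = ‖z / ((m:ℂ)+1)‖^2 := by ring
      _ = ‖z‖^2 * (1/((m:ℝ)+1)^2) := by
          rw [hnorm, div_pow]
          ring

theorem stmt_13 :
    ∀ z : ℂ, ¬(z.im = 0 ∧ z.re ≤ 0) →
      ‖logGamma z - ((z - 1 / 2) * Complex.log z - z + (Real.log (2 * Real.pi) : ℂ) / 2)‖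
        ≤ Real.pi / 8 * (1 / Metric.infDist z {w : ℂ | w.im = 0 ∧ w.re ≤ 0}) := by
  intro z hz0
  have hz : z ∈ Complex.slitPlane := by
    rw [Complex.mem_slitPlane_iff]
    by_cases him : z.im = 0
    · left
      rcases lt_or_ge 0 z.re with h | h
      · exact h
      · exact absurd ⟨him, h⟩ hz0
    · exact Or.inr him
  have hSset : {w : ℂ | w.im = 0 ∧ w.re ≤ 0} = Sset := rfl
  rw [hSset]
  set d := Metric.infDist z Sset with hdd
  -- summability of the gfun series
  set B : ℕ → ℝ := fun n => ∫ t in (0:ℝ)..1, (1/8) * ((‖z + (n:ℂ) + (t:ℂ)‖^2)⁻¹) with hB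
  have hslitn : ∀ n : ℕ, z + (n:ℂ) ∈ Complex.slitPlane := by
    intro n
    have := slit_add hz (Nat.cast_nonneg n : (0:ℝ) ≤ (n:ℝ))
    push_cast at this
    exact this
  have hgB : ∀ n : ℕ, ‖gfun (z + (n:ℂ))‖ ≤ B n := by
    intro n
    have := norm_gfun_le (hslitn n)
    apply this.trans_eq
    apply intervalIntegral.integral_congr
    intro t ht
    push_cast
    ring_nf
  have hB0 : ∀ n : ℕ, 0 ≤ B n := by
    intro n
    apply intervalIntegral.integral_nonneg (by norm_num)
    intro t ht
    positivity
  have hBsum : ∀ N : ℕ, ∑ n ∈ Finset.range N, B n ≤ π/8 * (1/d) := fun N => sum_B_le hz N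
  have hBsummable : Summable B := summable_of_sum_range_le hB0 hBsum
  have hgnorm : Summable (fun n : ℕ => ‖gfun (z + (n:ℂ))‖) :=
    Summable.of_nonneg_of_le (fun n => norm_nonneg _) hgB hBsummable
  have hgsummable : Summable (fun n : ℕ => gfun (z + (n:ℂ))) := hgnorm.of_norm
  -- limits
  have hA : Tendsto (fun N : ℕ => ∑ n ∈ Finset.range N, gfun (z + (n:ℂ))) atTop
      (𝓝 (∑' n : ℕ, gfun (z + (n:ℂ)))) := hgsummable.hasSum.tendsto_sum_nat
  have hE := tendsto_Efun hz
  have hf := summable_ffun z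
  have hS : Tendsto (fun N : ℕ => -(Real.eulerMascheroniConstant : ℂ) * z - Complex.log z
      + ∑ m ∈ Finset.range N, ffun z m) atTop (𝓝 (logGamma z)) := by
    have h1 := hf.hasSum.tendsto_sum_nat
    have h2 := h1.const_add (-(Real.eulerMascheroniConstant : ℂ) * z - Complex.log z)
    apply h2.congr'
    · filter_upwards with N
      ring
  have hS' : Tendsto (fun N : ℕ => -(Real.eulerMascheroniConstant : ℂ) * z - Complex.log z
      + ∑ m ∈ Finset.range N, ffun z m) atTop
      (𝓝 ((∑' n : ℕ, gfun (z + (n:ℂ)))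
        + ((z - 1/2) * Complex.log z - z + (Real.log (2*π) : ℂ)/2))) := by
    have := hA.add hE
    apply this.congr
    intro N
    exact (key_identity hz N).symm
  have hid : logGamma z = (∑' n : ℕ, gfun (z + (n:ℂ)))
      + ((z - 1/2) * Complex.log z - z + (Real.log (2*π) : ℂ)/2) :=
    tendsto_nhds_unique hS hS'
  have hrw : logGamma z - ((z - 1/2) * Complex.log z - z + (Real.log (2*π) : ℂ)/2)
      = ∑' n : ℕ, gfun (z + (n:ℂ)) := by
    rw [hid]; ring
  calc ‖logGamma z - ((z - 1/2) * Complex.log z - z + (Real.log (2*π) : ℂ)/2)‖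
      = ‖∑' n : ℕ, gfun (z + (n:ℂ))‖ := by rw [hrw]
    _ ≤ ∑' n : ℕ, ‖gfun (z + (n:ℂ))‖ := norm_tsum_le_tsum_norm hgnorm
    _ ≤ π/8 * (1/d) := by
        apply hgnorm.tsum_le_of_sum_range_le
        intro N
        exact le_trans (Finset.sum_le_sum (fun n _ => hgB n)) (hBsum N)
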